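/- arXiv:cs/0701145 — 3 statements merged into one kernel-verified Lean document; each statement's English description precedes it below -/
import Mathlib

section
/- Let M ≥ 1 and fix m ∈ {0,…,M−1}. With Î(r,m) = { rM² + (M+1)m + 1 − M·j : j ∈ {0,…,M−1} } ∩ {n : n ≥ 1}, the family (Î(r,m))_{r ∈ ℕ} is pairwise disjoint and its union equals the set { n ≥ 1 : n ≡ m + 1 (mod M) }. -/
/-- The set Î(r,m) of (positive) interval indices secured in operation Sec_mult_{r,m}. -/
def Ihat (M r m : ℕ) : Set ℤ :=
  {x : ℤ | (∃ j : ℕ, j < M ∧ x = (r : ℤ) * M ^ 2 + (M + 1) * m + 1 - M * j) ∧ 1 ≤ x}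

/-- for fixed m, the family (Î(r,m))_r is pairwise disjoint and its union
is the set of n ≥ 1 with n ≡ m + 1 (mod M). -/
theorem Ihat_partition_stream (M : ℕ) (hM : 1 ≤ M) (m : ℕ) (hm : m < M) :
    (Pairwise fun r r' : ℕ => Disjoint (Ihat M r m) (Ihat M r' m)) ∧
    (⋃ r : ℕ, Ihat M r m) = {n : ℤ | 1 ≤ n ∧ n % M = ((m : ℤ) + 1) % M} := by
  have hM' : (0:ℤ) < M := by exact_mod_cast hM
  constructor
  · intro r r' hne
    rw [Set.disjoint_left]
    rintro x ⟨⟨j, hj, hx⟩, hx1⟩ ⟨⟨j', hj', hx'⟩, -⟩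
    have h1 : (M:ℤ) * (((r:ℤ) - r') * M) = (M:ℤ) * ((j:ℤ) - j') := by
      have : (r:ℤ) * M ^ 2 + (M + 1) * m + 1 - M * j
          = (r':ℤ) * M ^ 2 + (M + 1) * m + 1 - M * j' := by rw [← hx, ← hx']
      nlinarith [this]
    have h2 : ((r:ℤ) - r') * M = (j:ℤ) - j' := mul_left_cancel₀ (ne_of_gt hM') h1
    have hjb : -(M:ℤ) < (j:ℤ) - j' ∧ (j:ℤ) - j' < M := by
      constructor <;> [omega; omega]
    rcases lt_or_gt_of_ne hne with h | h
    · have hd : (r:ℤ) < r' := by exact_mod_cast h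
      nlinarith [hjb.1, hjb.2]
    · have hd : (r':ℤ) < r := by exact_mod_cast h
      nlinarith [hjb.1, hjb.2]
  · ext x
    simp only [Set.mem_iUnion, Ihat, Set.mem_setOf_eq]
    constructor
    · rintro ⟨r, ⟨j, hj, hx⟩, hx1⟩
      refine ⟨hx1, ?_⟩
      have hdvd : (M:ℤ) ∣ ((m:ℤ) + 1) - x := ⟨(j:ℤ) - (r:ℤ) * M - m, by rw [hx]; ring⟩
      exact (Int.modEq_iff_dvd.mpr hdvd : x ≡ (m:ℤ) + 1 [ZMOD (M:ℤ)])
    · rintro ⟨hx1, hmod⟩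
      obtain ⟨t, ht⟩ := Int.modEq_iff_dvd.mp (hmod : x ≡ (m:ℤ) + 1 [ZMOD (M:ℤ)])
      -- (m+1) - x = M * t, so x = m + 1 + M * (-t)
      set u : ℤ := -t with hu
      have hxu : x = (m:ℤ) + 1 + M * u := by rw [hu]; linarith [ht]
      have hu0 : 0 ≤ u := by
        by_contra hneg
        push_neg at hneg
        have : u ≤ -1 := by omega
        nlinarith
      set tn : ℕ := u.toNat with htn
      have htn' : (tn:ℤ) = u := Int.toNat_of_nonneg hu0
      by_cases hcase : tn ≤ m
      · refine ⟨0, ⟨m - tn, by omega, ?_⟩, hx1⟩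
        have hcast : ((m - tn : ℕ) : ℤ) = (m:ℤ) - tn := by omega
        rw [hcast]
        rw [htn'] at *
        linear_combination hxu
      · push_neg at hcase
        set q : ℕ := (tn - m - 1) / M with hq
        set s : ℕ := (tn - m - 1) % M with hs
        have hsM : s < M := Nat.mod_lt _ hM
        have hqs : q * M + s = tn - m - 1 := by
          rw [hq, hs, mul_comm]; exact Nat.div_add_mod _ _
        have h' : q * M + s + m + 1 = tn := by rw [hqs]; omega
        have hqs' : (tn:ℤ) = (q:ℤ) * M + s + m + 1 := by exact_mod_cast h'.symm
        refine ⟨q + 1, ⟨M - 1 - s, by omega, ?_⟩, hx1⟩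
        have hcast : ((M - 1 - s : ℕ) : ℤ) = (M:ℤ) - 1 - s := by omega
        rw [hcast]
        rw [htn'] at hqs'
        push_cast
        linear_combination hxu + (M:ℤ) * hqs'
end

section
/- Let Agents be a type, K : Agents → Prop → Prop an operator, and Comm : Prop. Assume (monotonicity) for every agent a and propositions p q, (p → q) → K a p → K a q. Let L = [a_1, …, a_n] be a list of agents and assume (signing axiom) for each i ∈ {1,…,n}: K a_i (Comm ∧ ⋀_{j < i} K a_j Comm). If every agent of a finite set S occurs in L, and moreover for every a ∈ S there is an occurrence index i of a such that all agents of S occur among a_1,…,a_{i−1}, then ⋀_{a ∈ S} K a (⋀_{b ∈ S} K b Comm) holds, i.e., multilateral non-repudiation of Comm is achieved for S. -/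
/-- if K is monotone, each signer a_i of the list L knows Comm together
with the knowledge of all previous signers, and every agent of S occurs in L with all of
S occurring strictly earlier, then every agent of S knows that every agent of S knows
Comm (multilateral non-repudiation of Comm for S). -/
theorem multilateral_nonrepudiation {Agents : Type*} (K : Agents → Prop → Prop)
    (Comm : Prop)
    (hmono : ∀ (a : Agents) (p q : Prop), (p → q) → K a p → K a q)
    (L : List Agents)
    (hsign : ∀ i : Fin L.length,
      K (L.get i) (Comm ∧ ∀ j : Fin L.length, j < i → K (L.get j) Comm))
    (S : Finset Agents)
    (hcover : ∀ a ∈ S, ∃ i : Fin L.length, L.get i = a ∧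
      ∀ b ∈ S, ∃ j : Fin L.length, j < i ∧ L.get j = b) :
    ∀ a ∈ S, K a (∀ b ∈ S, K b Comm) := by
  intro a ha
  obtain ⟨i, hi, hall⟩ := hcover a ha
  have := hsign i
  rw [hi] at this
  refine hmono a _ _ ?_ this
  rintro ⟨_, hprev⟩ b hb
  obtain ⟨j, hj, hjb⟩ := hall b hb
  exact hjb ▸ hprev j hj
end

section
/- Let Agents be a type, S : Finset Agents nonempty, K : Agents → Prop → Prop monotone in its propositional argument, and Comm : Prop. Let L be the concatenation of two enumerations of S (each listing every element of S exactly once, in the same order a_1,…,a_M,a_1,…,a_M), and assume the signing axiom: for each position i of L, K (L_i) (Comm ∧ ⋀_{j < i} K (L_j) Comm). Then for all ℓ, k ∈ S: K ℓ (K k Comm). -/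
/-- Lemma 1 of the paper: nesting signatures in the order
a_1,…,a_M,a_1,…,a_M (two identical enumerations of S) around Comm achieves
multilateral non-repudiation: every party knows that every party knows Comm. -/
theorem lemma_one {Agents : Type*} (K : Agents → Prop → Prop) (Comm : Prop)
    (hmono : ∀ (a : Agents) (p q : Prop), (p → q) → K a p → K a q)
    (S : Finset Agents) (hS : S.Nonempty)
    (e : List Agents) (he_nodup : e.Nodup) (he_mem : ∀ a, a ∈ e ↔ a ∈ S)
    (L : List Agents) (hL : L = e ++ e)
    (hsign : ∀ i : Fin L.length,
      K (L.get i) (Comm ∧ ∀ j : Fin L.length, j < i → K (L.get j) Comm)) :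
    ∀ ℓ ∈ S, ∀ k ∈ S, K ℓ (K k Comm) := by
  subst hL
  intro ℓ hℓ k hk
  obtain ⟨il, hil, hle⟩ := List.getElem_of_mem ((he_mem ℓ).mpr hℓ)
  obtain ⟨ik, hik, hke⟩ := List.getElem_of_mem ((he_mem k).mpr hk)
  have hlen : (e ++ e).length = e.length + e.length := by simp
  have hi : e.length + il < (e ++ e).length := by omega
  have hj : ik < (e ++ e).length := by omega
  have hgi : (e ++ e).get ⟨e.length + il, hi⟩ = ℓ := by
    simp [List.getElem_append_right, hil, hle]
  have hgj : (e ++ e).get ⟨ik, hj⟩ = k := by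
    simp [List.getElem_append_left hik, hke]
  have := hsign ⟨e.length + il, hi⟩
  rw [hgi] at this
  refine hmono _ _ _ ?_ this
  rintro ⟨-, h⟩
  have := h ⟨ik, hj⟩ (by simp [Fin.lt_def]; omega)
  rwa [hgj] at this
end
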